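/- Let (R, 𝔪) be a (not necessarily Noetherian) commutative local ring and R ⊆ S an extension of commutative rings. Then the strict closure R* of R in S satisfies R* ⊆ R + 𝔪S. In particular, if 𝔪S ⊆ R then R is strictly closed in S. -/

import Mathlib

open scoped TensorProduct

/-- The strict closure of `R` in `S`. -/
def strictClosure (R : Type*) [CommRing R] (S : Type*) [CommRing S] [Algebra R S] : Set S :=
  {α : S | α ⊗ₜ[R] (1 : S) = (1 : S) ⊗ₜ[R] α}

/-- If `(R, 𝔪)` is local (not necessarily Noetherian) and `S/R` is an extension of rings,
then `R* ⊆ R + 𝔪S`; in particular, if `𝔪S ⊆ R` then `R` is strictly closed in `S`. -/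
theorem strictClosure_subset_add_maximalIdeal_smul (R S : Type*) [CommRing R] [IsLocalRing R]
    [CommRing S] [Algebra R S] (hinj : Function.Injective (algebraMap R S)) :
    strictClosure R S ⊆
      {s : S | ∃ r : R, ∃ m ∈ Ideal.map (algebraMap R S) (IsLocalRing.maximalIdeal R),
        s = algebraMap R S r + m} ∧
    ((Ideal.map (algebraMap R S) (IsLocalRing.maximalIdeal R) : Set S) ⊆
        Set.range (algebraMap R S) →
      strictClosure R S = Set.range (algebraMap R S)) := by
  have key : ∀ α ∈ strictClosure R S, ∃ r : R,
      ∃ m ∈ Ideal.map (algebraMap R S) (IsLocalRing.maximalIdeal R),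
      α = algebraMap R S r + m := by
    intro α hα
    by_contra hmem
    push_neg at hmem
    have hItop : Ideal.map (algebraMap R S) (IsLocalRing.maximalIdeal R) ≠ ⊤ := by
      intro h
      exact hmem 0 α (h ▸ Submodule.mem_top) (by simp)
    set N : Submodule R S := LinearMap.range (Algebra.linearMap R S) ⊔
      (Ideal.map (algebraMap R S) (IsLocalRing.maximalIdeal R)).restrictScalars R with hN
    have hIN : ∀ x ∈ Ideal.map (algebraMap R S) (IsLocalRing.maximalIdeal R), x ∈ N :=
      fun x hx => Submodule.mem_sup_right hx
    have hαN : α ∉ N := by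
      intro h
      obtain ⟨y, hy, z, hz, hyz⟩ := Submodule.mem_sup.mp h
      obtain ⟨r, rfl⟩ := hy
      exact hmem r z hz (by rw [← hyz]; rfl)
    have h1N : (1 : S) ∈ N := Submodule.mem_sup_left ⟨1, by simp⟩
    have hT : Module.IsTorsionBySet R (S ⧸ N) ((IsLocalRing.maximalIdeal R : Ideal R) : Set R) := by
      intro x m
      obtain ⟨y, rfl⟩ := Submodule.Quotient.mk_surjective N x
      rw [← Submodule.Quotient.mk_smul, Submodule.Quotient.mk_eq_zero]
      refine hIN _ ?_
      rw [Algebra.smul_def]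
      exact Ideal.mul_mem_right _ _ (Ideal.mem_map_of_mem _ m.2)
    letI : Module (IsLocalRing.ResidueField R) (S ⧸ N) := hT.module
    haveI : IsScalarTower R (IsLocalRing.ResidueField R) (S ⧸ N) := hT.isScalarTower
    have hne : (Submodule.Quotient.mk α : S ⧸ N) ≠ 0 := by
      rw [Ne, Submodule.Quotient.mk_eq_zero]; exact hαN
    have hex : ∃ φ : Module.Dual (IsLocalRing.ResidueField R) (S ⧸ N),
        φ (Submodule.Quotient.mk α) ≠ 0 := by
      by_contra h
      push_neg at h
      exact hne ((Module.forall_dual_apply_eq_zero_iff (IsLocalRing.ResidueField R) _).mp h)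
    obtain ⟨φ, hφ⟩ := hex
    set ψ : S →ₗ[R] (R ⧸ IsLocalRing.maximalIdeal R) :=
      ((φ.restrictScalars R).comp N.mkQ : S →ₗ[R] IsLocalRing.ResidueField R) with hψ
    have hψ1 : ψ 1 = 0 := by
      have h0 : (Submodule.Quotient.mk (1 : S) : S ⧸ N) = 0 := by
        rw [Submodule.Quotient.mk_eq_zero]; exact h1N
      show φ (Submodule.Quotient.mk (1 : S)) = 0
      rw [h0, map_zero]
    have hψα : ψ α = φ (Submodule.Quotient.mk α) := rfl
    have happ := congrArg (LinearMap.lTensor S ψ) hα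
    rw [LinearMap.lTensor_tmul, LinearMap.lTensor_tmul, hψ1, TensorProduct.tmul_zero] at happ
    obtain ⟨c, hc⟩ := Ideal.Quotient.mk_surjective (ψ α)
    have happ2 : (Submodule.Quotient.mk (c • (1 : S)) :
        S ⧸ (IsLocalRing.maximalIdeal R • ⊤ : Submodule R S)) = 0 := by
      have h1 := TensorProduct.tensorQuotEquivQuotSMul_tmul_mk
        (M := S) (IsLocalRing.maximalIdeal R) (1 : S) c
      rw [← h1, hc, ← happ]
      exact (TensorProduct.tensorQuotEquivQuotSMul S
        (IsLocalRing.maximalIdeal R)).toLinearMap.map_zero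
    have hcI : algebraMap R S c ∈ Ideal.map (algebraMap R S) (IsLocalRing.maximalIdeal R) := by
      have h0 := (Submodule.Quotient.mk_eq_zero _).mp happ2
      rw [Ideal.smul_top_eq_map] at h0
      simpa [Algebra.smul_def] using h0
    have hcu : IsUnit c := by
      by_contra hcu
      have hc𝔪 : c ∈ IsLocalRing.maximalIdeal R := hcu
      apply hφ
      rw [← hψα, ← hc]
      exact Ideal.Quotient.eq_zero_iff_mem.mpr hc𝔪
    exact hItop (Ideal.eq_top_of_isUnit_mem _ hcI (hcu.map (algebraMap R S)))
  refine ⟨fun α hα => key α hα, fun hsub => ?_⟩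
  ext s
  constructor
  · intro hs
    obtain ⟨r, m, hm, rfl⟩ := key s hs
    obtain ⟨r', hr'⟩ := hsub hm
    exact ⟨r + r', by rw [map_add, hr']⟩
  · rintro ⟨r, rfl⟩
    show (algebraMap R S r) ⊗ₜ[R] (1 : S) = (1 : S) ⊗ₜ[R] (algebraMap R S r)
    rw [Algebra.algebraMap_eq_smul_one, TensorProduct.smul_tmul]
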